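/- Exponential mechanism is differentially private: if the loss satisfies sup_{z∈Z, h∈H} |ℓ(z,h)| ≤ B, and A(Z) samples h with density proportional to exp(−γ Σᵢ ℓ(zᵢ,h)), then for any adjacent datasets Z, Z' (differing in one entry) and any measurable H₀ ⊆ H, P(A(Z) ∈ H₀) ≤ exp(4Bγ)·P(A(Z') ∈ H₀), i.e., A is 4Bγ-differentially private. -/
import Mathlib


open MeasureTheory Real

/-- The exponential mechanism is differentially private: if `|ℓ(z,h)| ≤ B` uniformly
and `A(Z)` samples `h` with density proportional to `exp(−γ Σᵢ ℓ(zᵢ,h))` w.r.t. `ν`,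
then for adjacent datasets `Z, Z'` (differing in one entry) and any measurable set
`H₀`, `P(A(Z) ∈ H₀) ≤ exp(4Bγ)·P(A(Z') ∈ H₀)`, i.e. `A` is `4Bγ`-differentially
private. -/
theorem exponential_mechanism_dp
    {𝒵 H : Type*} [MeasurableSpace 𝒵] [MeasurableSpace H]
    (ν : Measure H) {n : ℕ}
    (ℓ : 𝒵 → H → ℝ) (B γ : ℝ) (hγ : 0 ≤ γ)
    (hB : ∀ (z : 𝒵) (h : H), |ℓ z h| ≤ B)
    (hKint : ∀ Z : Fin n → 𝒵,
      Integrable (fun h => Real.exp (-γ * ∑ i, ℓ (Z i) h)) ν)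
    (hKpos : ∀ Z : Fin n → 𝒵,
      0 < ∫ h, Real.exp (-γ * ∑ i, ℓ (Z i) h) ∂ν) :
    ∀ Z Z' : Fin n → 𝒵, (∃ j, ∀ i, i ≠ j → Z i = Z' i) →
      ∀ H₀ : Set H, MeasurableSet H₀ →
        (∫ h in H₀, Real.exp (-γ * ∑ i, ℓ (Z i) h) ∂ν) /
            (∫ h, Real.exp (-γ * ∑ i, ℓ (Z i) h) ∂ν)
          ≤ Real.exp (4 * B * γ) *
            ((∫ h in H₀, Real.exp (-γ * ∑ i, ℓ (Z' i) h) ∂ν) /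
              (∫ h, Real.exp (-γ * ∑ i, ℓ (Z' i) h) ∂ν)) := by
  intro Z Z' ⟨j, hj⟩ H₀ hH₀
  set f : H → ℝ := fun h => Real.exp (-γ * ∑ i, ℓ (Z i) h) with hf
  set g : H → ℝ := fun h => Real.exp (-γ * ∑ i, ℓ (Z' i) h) with hg
  have hdiff : ∀ h, |(∑ i, ℓ (Z i) h) - (∑ i, ℓ (Z' i) h)| ≤ 2 * B := by
    intro h
    have : (∑ i, ℓ (Z i) h) - (∑ i, ℓ (Z' i) h)
        = ∑ i, (ℓ (Z i) h - ℓ (Z' i) h) := by rw [Finset.sum_sub_distrib]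
    rw [this, Finset.sum_eq_single j (fun i _ hij => by rw [hj i hij, sub_self])
      (fun hjm => absurd (Finset.mem_univ j) hjm)]
    calc |ℓ (Z j) h - ℓ (Z' j) h| ≤ |ℓ (Z j) h| + |ℓ (Z' j) h| := abs_sub _ _
    _ ≤ B + B := add_le_add (hB _ _) (hB _ _)
    _ = 2 * B := by ring
  have key : ∀ (u v : ℝ), |u - v| ≤ 2 * B →
      Real.exp (-γ * u) ≤ Real.exp (2 * B * γ) * Real.exp (-γ * v) := by
    intro u v huv
    rw [← Real.exp_add]
    apply Real.exp_le_exp.mpr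
    have h1 : v - u ≤ 2 * B := by
      have := (abs_le.mp huv).1; linarith
    nlinarith [mul_le_mul_of_nonneg_left h1 hγ]
  have hfg : ∀ h, f h ≤ Real.exp (2 * B * γ) * g h := fun h =>
    key _ _ (hdiff h)
  have hgf : ∀ h, g h ≤ Real.exp (2 * B * γ) * f h := fun h =>
    key _ _ (by rw [abs_sub_comm]; exact hdiff h)
  have hnum : (∫ h in H₀, f h ∂ν) ≤ Real.exp (2 * B * γ) * ∫ h in H₀, g h ∂ν := by
    rw [← integral_const_mul]
    exact integral_mono ((hKint Z).restrict) (((hKint Z').restrict).const_mul _) hfg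
  have hden : (∫ h, g h ∂ν) ≤ Real.exp (2 * B * γ) * ∫ h, f h ∂ν := by
    rw [← integral_const_mul]
    exact integral_mono (hKint Z') ((hKint Z).const_mul _) hgf
  have hgpos : 0 < ∫ h, g h ∂ν := hKpos Z'
  have hfpos : 0 < ∫ h, f h ∂ν := hKpos Z
  have hnumg : 0 ≤ ∫ h in H₀, g h ∂ν :=
    integral_nonneg fun h => (Real.exp_pos _).le
  rw [mul_div_assoc', div_le_div_iff₀ hfpos hgpos]
  calc (∫ h in H₀, f h ∂ν) * ∫ h, g h ∂ν
      ≤ (Real.exp (2 * B * γ) * ∫ h in H₀, g h ∂ν) *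
        (Real.exp (2 * B * γ) * ∫ h, f h ∂ν) :=
        mul_le_mul hnum hden (integral_nonneg fun h => (Real.exp_pos _).le)
          (by positivity)
    _ = Real.exp (4 * B * γ) * (∫ h in H₀, g h ∂ν) * ∫ h, f h ∂ν := by
        have : Real.exp (2 * B * γ) * Real.exp (2 * B * γ) = Real.exp (4 * B * γ) := by
          rw [← Real.exp_add]; ring_nf
        rw [← this]; ring
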